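/- For a prime p, an integer k ≥ 1, and s not divisible by p, the exponential sum S_k(s) = Σ_{x=0}^{p-1} e^{2πi s x^k / p} satisfies |S_k(s)| ≤ (k-1)√p. -/

import Mathlib

open Finset

noncomputable def expSum (p k : ℕ) (s : ℤ) : ℂ :=
  ∑ x ∈ Finset.range p, Complex.exp (2 * Real.pi * Complex.I * s * (x : ℂ) ^ k / p)

section Aux

/-- order of a hom out of a cyclic group equals order of its value at a generator -/
lemma orderOf_hom_eval {G H : Type*} [CommGroup G] [CommGroup H] {g : G}
    (hg : ∀ x : G, x ∈ Subgroup.zpowers g) (χ : G →* H) : orderOf χ = orderOf (χ g) := by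
  rw [orderOf_eq_orderOf_iff]
  intro m
  constructor
  · intro h
    have : (χ ^ m) g = 1 := by rw [h]; rfl
    rwa [MonoidHom.pow_apply] at this
  · intro h
    ext x
    obtain ⟨i, rfl⟩ := Subgroup.mem_zpowers_iff.mp (hg x)
    rw [MonoidHom.pow_apply, MonoidHom.one_apply, map_zpow, ← zpow_natCast, ← zpow_mul,
      mul_comm, zpow_mul, zpow_natCast, h, one_zpow]

/-- kernel of the k-th power map equals kernel of the gcd(k, card G)-th power map -/
lemma ker_pow_eq {G : Type*} [CommGroup G] [Finite G] (k : ℕ) :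
    (powMonoidHom k : G →* G).ker = (powMonoidHom (Nat.gcd k (Nat.card G)) : G →* G).ker := by
  ext x
  simp only [MonoidHom.mem_ker, powMonoidHom_apply, ← orderOf_dvd_iff_pow_eq_one]
  constructor
  · intro h
    exact Nat.dvd_gcd h (orderOf_dvd_natCard x)
  · intro h
    exact h.trans (Nat.gcd_dvd_left _ _)

/-- range of the k-th power map equals range of the gcd(k, card G)-th power map -/
lemma range_pow_eq {G : Type*} [CommGroup G] [Finite G] (k : ℕ) :
    (powMonoidHom k : G →* G).range = (powMonoidHom (Nat.gcd k (Nat.card G)) : G →* G).range := by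
  set n := Nat.card G
  set d := Nat.gcd k n with hd
  ext y
  simp only [MonoidHom.mem_range, powMonoidHom_apply]
  constructor
  · rintro ⟨x, rfl⟩
    obtain ⟨k', hk'⟩ := Nat.gcd_dvd_left k n
    exact ⟨x ^ k', by rw [← pow_mul, mul_comm k' d, ← hk']⟩
  · rintro ⟨x, rfl⟩
    refine ⟨(x ^ (k.gcdA n) : G), ?_⟩
    have hxn : x ^ (n : ℤ) = 1 := by
      rw [zpow_natCast]; exact pow_card_eq_one'
    have hbez := Nat.gcd_eq_gcd_ab k n
    calc (x ^ (k.gcdA n)) ^ k = x ^ ((k : ℤ) * k.gcdA n) := by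
          rw [← zpow_natCast ((x ^ (k.gcdA n) : G)) k, ← zpow_mul, mul_comm]
      _ = x ^ ((d : ℤ)) * (x ^ (n : ℤ)) ^ (-(k.gcdB n)) := by
          rw [← zpow_mul, ← zpow_add]
          congr 1
          rw [← hd] at hbez
          push_cast
          linear_combination -hbez
      _ = x ^ d := by rw [hxn, one_zpow, mul_one, zpow_natCast]

/-- fibers of a surjective-onto-range hom have the cardinality of the kernel. -/
lemma card_fiber_eq_card_ker {G : Type*} [CommGroup G] [Fintype G] [DecidableEq G]
    (f : G →* G) {a : G} (ha : a ∈ f.range) :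
    (univ.filter (fun x => f x = a)).card = (univ.filter (fun x => f x = 1)).card := by
  obtain ⟨b, rfl⟩ := ha
  apply Finset.card_bij (fun x _ => b⁻¹ * x)
  · intro x hx
    simp only [mem_filter, mem_univ, true_and] at hx ⊢
    simp [map_mul, hx]
  · intro x hx y hy h
    exact mul_left_cancel h
  · intro y hy
    simp only [mem_filter, mem_univ, true_and] at hy
    exact ⟨b * y, by simp [map_mul, hy], by group⟩

/-- number of solutions to x^d = 1 in (ZMod p)ˣ is d, for d ∣ p - 1 -/
lemma card_pow_d {p d : ℕ} [Fact p.Prime] (hd : d ∣ p - 1) (hd0 : d ≠ 0) :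
    (univ.filter (fun x : (ZMod p)ˣ => x ^ d = 1)).card = d := by
  have : NeZero d := ⟨hd0⟩
  obtain ⟨g, hg⟩ := IsCyclic.exists_generator (α := (ZMod p)ˣ)
  have hgord : orderOf g = p - 1 := by
    rw [orderOf_eq_card_of_forall_mem_zpowers hg, Nat.card_eq_fintype_card, ZMod.card_units]
  have hp2 := (Fact.out (p := p.Prime)).two_le
  have hgord' : orderOf g ≠ 0 := by omega
  have h1 : orderOf (g ^ ((p - 1) / d)) = d := by
    rw [← hgord]
    exact orderOf_pow_orderOf_div hgord' (hgord ▸ hd)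
  have hprim : IsPrimitiveRoot ((g ^ ((p - 1) / d) : (ZMod p)ˣ) : ZMod p) d := by
    rw [IsPrimitiveRoot.coe_units_iff]
    have h2 := IsPrimitiveRoot.orderOf (g ^ ((p - 1) / d))
    rwa [h1] at h2
  have h2 : Nat.card ↥(rootsOfUnity d (ZMod p)) = d := hprim.card_rootsOfUnity
  have h3 : (univ.filter (fun x : (ZMod p)ˣ => x ^ d = 1)).card
      = Fintype.card {x : (ZMod p)ˣ // x ^ d = 1} := (Fintype.card_subtype _).symm
  have h4 : Fintype.card {x : (ZMod p)ˣ // x ^ d = 1}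
      = Nat.card ↥(rootsOfUnity d (ZMod p)) := by
    rw [← Nat.card_eq_fintype_card]; exact
    Nat.card_congr (Equiv.subtypeEquivRight (fun x => (mem_rootsOfUnity d x).symm))
  rw [h3, h4, h2]

/-- the kernel of a character of order d equals the range of the d-th power map -/
lemma ker_char_eq_range_pow {p d : ℕ} [Fact p.Prime] (hd : d ∣ p - 1) (hd0 : d ≠ 0)
    {χ₀ : MulChar (ZMod p) ℂ} (hχ₀ : orderOf χ₀ = d) :
    (MulChar.equivToUnitHom χ₀).ker
      = (powMonoidHom d : (ZMod p)ˣ →* (ZMod p)ˣ).range := by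
  obtain ⟨g, hg⟩ := IsCyclic.exists_generator (α := (ZMod p)ˣ)
  set χ := MulChar.equivToUnitHom χ₀ with hχdef
  have hordχ : orderOf χ = d := by
    rw [← hχ₀, orderOf_eq_orderOf_iff]
    intro m
    have hval : ∀ b : (ZMod p)ˣ, ((χ b : ℂˣ) : ℂ) = χ₀ (b : ZMod p) :=
      fun b => MulChar.coe_equivToUnitHom χ₀ b
    constructor
    · intro h
      rw [MulChar.eq_one_iff]
      intro b
      rw [MulChar.pow_apply_coe]
      have h1 := DFunLike.congr_fun h b
      rw [MonoidHom.pow_apply, MonoidHom.one_apply] at h1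
      have h2 := congrArg Units.val h1
      rw [Units.val_pow_eq_pow_val, hval, Units.val_one] at h2
      exact h2
    · intro h
      by_cases hm : m = 0
      · subst hm; rw [pow_zero]
      · ext b
        rw [MonoidHom.pow_apply, MonoidHom.one_apply]
        have h1 : (χ₀ ^ m) ((b : ZMod p)) = (1 : MulChar (ZMod p) ℂ) ((b : ZMod p)) := by
          rw [h]
        rw [MulChar.pow_apply' χ₀ hm ((b : ZMod p))] at h1
        rw [MulChar.one_apply_coe b] at h1
        rw [Units.val_pow_eq_pow_val, hval, Units.val_one]
        exact h1
  have hn : Nat.card (ZMod p)ˣ = p - 1 := by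
    rw [Nat.card_eq_fintype_card, ZMod.card_units]
  have hle : (powMonoidHom d : (ZMod p)ˣ →* (ZMod p)ˣ).range ≤ χ.ker := by
    rintro y ⟨x, rfl⟩
    rw [MonoidHom.mem_ker, powMonoidHom_apply, map_pow, ← MonoidHom.pow_apply,
      ← hordχ, pow_orderOf_eq_one, MonoidHom.one_apply]
  -- cardinalities
  have hcard1 : p - 1 = d * Nat.card χ.ker := by
    have h1 : Nat.card ((ZMod p)ˣ ⧸ χ.ker) = d := by
      rw [Nat.card_congr (QuotientGroup.quotientKerEquivRange χ).toEquiv,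
        MonoidHom.range_eq_map, ← (Subgroup.eq_top_iff' (Subgroup.zpowers g)).mpr hg,
        MonoidHom.map_zpowers, Nat.card_zpowers, ← orderOf_hom_eval hg χ, hordχ]
    rw [← hn, Subgroup.card_eq_card_quotient_mul_card_subgroup χ.ker, h1]
  have hcard2 : p - 1 = Nat.card ((powMonoidHom d : (ZMod p)ˣ →* (ZMod p)ˣ).range) * d := by
    have hker : Nat.card ((powMonoidHom d : (ZMod p)ˣ →* (ZMod p)ˣ).ker) = d :=
      calc Nat.card ((powMonoidHom d : (ZMod p)ˣ →* (ZMod p)ˣ).ker)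
          = Fintype.card {x : (ZMod p)ˣ // x ^ d = 1} := by
            rw [Nat.card_eq_fintype_card]
            exact Fintype.card_congr (Equiv.subtypeEquivRight (fun x => by
              simp [MonoidHom.mem_ker, powMonoidHom_apply]))
        _ = (univ.filter (fun x : (ZMod p)ˣ => x ^ d = 1)).card := Fintype.card_subtype _
        _ = d := card_pow_d hd hd0
    rw [← hn, Subgroup.card_eq_card_quotient_mul_card_subgroup
        (powMonoidHom d : (ZMod p)ˣ →* (ZMod p)ˣ).ker, hker,
      Nat.card_congr (QuotientGroup.quotientKerEquivRange _).toEquiv]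
  have hcards : Nat.card χ.ker
      ≤ Nat.card ((powMonoidHom d : (ZMod p)ˣ →* (ZMod p)ˣ).range) := by
    have h5 : d * Nat.card χ.ker
        = d * Nat.card ((powMonoidHom d : (ZMod p)ˣ →* (ZMod p)ˣ).range) := by
      rw [← hcard1, hcard2]; ring
    exact le_of_eq (Nat.eq_of_mul_eq_mul_left (Nat.pos_of_ne_zero hd0) h5)
  exact (Subgroup.eq_of_le_of_card_ge hle hcards).symm

/-- Claim A : the fiber count equals a character sum -/
lemma claimA {p k d : ℕ} [Fact p.Prime] (hk : 1 ≤ k) (hd : d = Nat.gcd k (p - 1))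
    {χ₀ : MulChar (ZMod p) ℂ} (hχ₀ : orderOf χ₀ = d) (a : (ZMod p)ˣ) :
    ((univ.filter (fun x : (ZMod p)ˣ => x ^ k = a)).card : ℂ)
      = ∑ j ∈ range d, χ₀ (a : ZMod p) ^ j := by
  have hn : Nat.card (ZMod p)ˣ = p - 1 := by
    rw [Nat.card_eq_fintype_card, ZMod.card_units]
  have hd0 : d ≠ 0 := by
    rw [hd]
    intro h
    rw [Nat.gcd_eq_zero_iff] at h
    omega
  have hddvd : d ∣ p - 1 := hd ▸ Nat.gcd_dvd_right _ _
  have hkerr := ker_char_eq_range_pow hddvd hd0 hχ₀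
  have hranges : (powMonoidHom k : (ZMod p)ˣ →* (ZMod p)ˣ).range
      = (powMonoidHom d : (ZMod p)ˣ →* (ZMod p)ˣ).range := by
    rw [range_pow_eq k, hn, ← hd]
  have hbridge : ∀ b : (ZMod p)ˣ, χ₀ (b : ZMod p) = 1 ↔ MulChar.equivToUnitHom χ₀ b = 1 := by
    intro b
    rw [Units.ext_iff, Units.val_one, MulChar.coe_equivToUnitHom]
  by_cases ha : χ₀ (a : ZMod p) = 1
  · -- a is a k-th power; count is d
    have hamem : a ∈ (powMonoidHom k : (ZMod p)ˣ →* (ZMod p)ˣ).range := by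
      rw [hranges, ← hkerr, MonoidHom.mem_ker, ← hbridge a]
      exact ha
    have h1 : (univ.filter (fun x : (ZMod p)ˣ => x ^ k = a)).card = d := by
      have := card_fiber_eq_card_ker (powMonoidHom k : (ZMod p)ˣ →* (ZMod p)ˣ) hamem
      simp only [powMonoidHom_apply] at this
      rw [this, ← card_pow_d hddvd hd0]
      congr 1
      ext x
      have := ker_pow_eq (G := (ZMod p)ˣ) k
      rw [hn, ← hd] at this
      have hx := Subgroup.ext_iff.mp this x
      simp only [MonoidHom.mem_ker, powMonoidHom_apply] at hx
      simp [hx]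
    rw [h1]
    rw [Finset.sum_congr rfl (fun j _ => by rw [ha, one_pow])]
    simp
  · -- a is not a k-th power; count is 0
    have hamem : a ∉ (powMonoidHom k : (ZMod p)ˣ →* (ZMod p)ˣ).range := by
      rw [hranges, ← hkerr, MonoidHom.mem_ker, ← hbridge a]
      exact ha
    have h1 : (univ.filter (fun x : (ZMod p)ˣ => x ^ k = a)).card = 0 := by
      rw [Finset.card_eq_zero]
      ext x
      simp only [mem_filter, mem_univ, true_and, Finset.notMem_empty, iff_false]
      intro hx
      exact hamem ⟨x, by rw [powMonoidHom_apply, hx]⟩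
    rw [h1, geom_sum_eq ha]
    have : χ₀ (a : ZMod p) ^ d = 1 := by
      rw [← MulChar.pow_apply_coe, ← hχ₀, pow_orderOf_eq_one, MulChar.one_apply_coe]
    rw [this]
    simp

/-- splitting a sum over ZMod p into the zero term and units -/
lemma sum_units_eq {p : ℕ} [Fact p.Prime] (f : ZMod p → ℂ) :
    ∑ a : ZMod p, f a = f 0 + ∑ u : (ZMod p)ˣ, f u := by
  have himg : (univ.image (fun u : (ZMod p)ˣ => (u : ZMod p))) = univ.erase 0 := by
    ext a
    simp only [mem_image, mem_univ, true_and, mem_erase, and_true]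
    constructor
    · rintro ⟨u, rfl⟩; exact u.ne_zero
    · intro h; exact ⟨(isUnit_iff_ne_zero.mpr h).unit, (isUnit_iff_ne_zero.mpr h).unit_spec⟩
  have h2 : ∑ u : (ZMod p)ˣ, f u = ∑ a ∈ univ.erase 0, f a := by
    rw [← himg, Finset.sum_image (fun x _ y _ h => Units.ext h)]
  rw [h2, ← Finset.add_sum_erase univ f (mem_univ 0)]

/-- absolute value of a Gauss sum -/
lemma abs_gaussSum {p : ℕ} [Fact p.Prime] {χ : MulChar (ZMod p) ℂ} (hχ : χ ≠ 1)
    {ψ : AddChar (ZMod p) ℂ} (hψ : ψ.IsPrimitive) :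
    ‖gaussSum χ ψ‖ = Real.sqrt p := by
  have hp0 : p ≠ 0 := (Fact.out (p := p.Prime)).pos.ne'
  have h2 : (starRingEnd ℂ) (gaussSum χ ψ) = gaussSum χ⁻¹ ψ⁻¹ := by
    rw [gaussSum, gaussSum, map_sum]
    refine Finset.sum_congr rfl fun a _ => ?_
    rw [map_mul]
    congr 1
    · exact MulChar.star_apply' χ a
    · have hpow : (ψ a) ^ p = 1 := by
        rw [← AddChar.map_nsmul_eq_pow]
        have : (p : ℕ) • a = 0 := by
          simp [nsmul_eq_mul, ZMod.natCast_self]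
        rw [this, AddChar.map_zero_eq_one]
      have hnorm : ‖ψ a‖ = 1 := Complex.norm_eq_one_of_pow_eq_one hpow hp0
      rw [AddChar.inv_apply, AddChar.map_neg_eq_inv, Complex.inv_eq_conj hnorm]
  have key : gaussSum χ ψ * (starRingEnd ℂ) (gaussSum χ ψ) = (p : ℂ) := by
    rw [h2, gaussSum_mul_gaussSum_eq_card hχ hψ, ZMod.card]
  rw [Complex.mul_conj] at key
  have : Complex.normSq (gaussSum χ ψ) = (p : ℝ) := by exact_mod_cast key
  rw [Complex.norm_def, this]

lemma sum_range_to_zmod {p : ℕ} [NeZero p] (f : ZMod p → ℂ) :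
    ∑ x ∈ range p, f ((x : ℕ) : ZMod p) = ∑ y : ZMod p, f y := by
  apply Finset.sum_nbij' (i := fun (x : ℕ) => ((x : ℕ) : ZMod p))
    (j := fun (y : ZMod p) => y.val)
  · intros a ha; exact mem_univ _
  · intros a ha; exact Finset.mem_range.mpr (ZMod.val_lt a)
  · intro a ha
    exact ZMod.val_cast_of_lt (Finset.mem_range.mp ha)
  · intro a ha
    simp [ZMod.natCast_val, ZMod.cast_id]
  · intros; rfl

end Aux

theorem stmt_0 (p k : ℕ) (s : ℤ) (hp : p.Prime) (hk : 1 ≤ k) (hs : ¬ (p : ℤ) ∣ s) :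
    ‖expSum p k s‖ ≤ ((k : ℝ) - 1) * Real.sqrt p := by
  haveI : Fact p.Prime := ⟨hp⟩
  haveI : NeZero p := ⟨hp.pos.ne'⟩
  have hp2 := hp.two_le
  set d := Nat.gcd k (p - 1) with hddef
  have hd0 : d ≠ 0 := by
    intro h
    rw [hddef] at h
    rcases Nat.gcd_eq_zero_iff.mp h with ⟨h1, _⟩
    omega
  have hddvd : d ∣ p - 1 := Nat.gcd_dvd_right _ _
  have hdk : d ≤ k := Nat.le_of_dvd hk (Nat.gcd_dvd_left _ _)
  -- the standard additive character
  have hζprim := Complex.isPrimitiveRoot_exp p (NeZero.ne p)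
  have hζp : Complex.exp (2 * Real.pi * Complex.I / p) ^ p = 1 := hζprim.pow_eq_one
  set ψ : AddChar (ZMod p) ℂ := AddChar.zmodChar p hζp with hψdef
  have hψprim : ψ.IsPrimitive := AddChar.zmodChar_primitive_of_primitive_root p hζprim
  set sbar : ZMod p := ((s : ℤ) : ZMod p) with hsbardef
  have hsbar0 : sbar ≠ 0 := by
    rw [hsbardef, Ne, ZMod.intCast_zmod_eq_zero_iff_dvd]
    exact hs
  set ψ' : AddChar (ZMod p) ℂ := ψ.mulShift sbar with hψ'def
  have hψ'prim : ψ'.IsPrimitive := by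
    intro a ha
    rw [hψ'def, AddChar.mulShift_mulShift]
    exact hψprim (mul_ne_zero hsbar0 ha)
  have hψ'ne : ψ' ≠ 1 := hψprim hsbar0
  -- Step 1 : rewrite expSum through the additive character
  have step1 : expSum p k s = ∑ y : ZMod p, ψ' (y ^ k) := by
    rw [expSum, ← sum_range_to_zmod (p := p) (fun y => ψ' (y ^ k))]
    refine Finset.sum_congr rfl fun x hx => ?_
    have hm : (2 * Real.pi * Complex.I * s * (x : ℂ) ^ k / p)
        = ((s * (x : ℤ) ^ k : ℤ) : ℂ) * (2 * Real.pi * Complex.I / p) := by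
      push_cast
      ring
    rw [hm, Complex.exp_int_mul]
    rw [hψ'def, AddChar.mulShift_apply]
    have hcast : sbar * (((x : ℕ) : ZMod p)) ^ k = ((s * (x : ℤ) ^ k : ℤ) : ZMod p) := by
      rw [hsbardef]
      push_cast
      ring
    rw [hcast, hψdef, AddChar.zmodChar_apply]
    set ζ := Complex.exp (2 * Real.pi * Complex.I / p) with hζdef
    have hζne : ζ ≠ 0 := Complex.exp_ne_zero _
    set m : ℤ := s * (x : ℤ) ^ k with hmdef
    set v : ℕ := ((m : ZMod p)).val with hvdef
    have hdvd : (p : ℤ) ∣ m - (v : ℤ) := by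
      rw [← ZMod.intCast_zmod_eq_zero_iff_dvd]
      push_cast
      rw [hvdef, ZMod.natCast_val, ZMod.cast_id, sub_self]
    obtain ⟨t, ht⟩ := hdvd
    have hmv : m = (v : ℤ) + (p : ℤ) * t := by omega
    rw [hmv, zpow_add₀ hζne, zpow_natCast, zpow_mul, zpow_natCast, hζp, one_zpow, mul_one]
  -- Step 2 : split off zero
  have step2 : ∑ y : ZMod p, ψ' (y ^ k) = 1 + ∑ u : (ZMod p)ˣ, ψ' ((u : ZMod p) ^ k) := by
    rw [sum_units_eq (fun y => ψ' (y ^ k))]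
    congr 1
    rw [zero_pow (by omega : k ≠ 0), AddChar.map_zero_eq_one]
  -- the multiplicative character of order d
  have hcardF : d ∣ Fintype.card (ZMod p) - 1 := by rw [ZMod.card]; exact hddvd
  obtain ⟨χ₀, hχ₀⟩ := MulChar.exists_mulChar_orderOf (ZMod p) (R := ℂ) hcardF
    (Complex.isPrimitiveRoot_exp d hd0)
  -- Step 3 : character decomposition of the fiber counts
  have step3 : ∑ u : (ZMod p)ˣ, ψ' ((u : ZMod p) ^ k)
      = ∑ j ∈ range d, ∑ u : (ZMod p)ˣ, (χ₀ ^ j) (u : ZMod p) * ψ' (u : ZMod p) := by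
    have h1 : ∑ u : (ZMod p)ˣ, ψ' ((u : ZMod p) ^ k)
        = ∑ a : (ZMod p)ˣ, ((univ.filter (fun u : (ZMod p)ˣ => u ^ k = a)).card : ℂ)
            * ψ' (a : ZMod p) := by
      rw [← Finset.sum_fiberwise univ (fun u : (ZMod p)ˣ => u ^ k)
        (fun u => ψ' ((u : ZMod p) ^ k))]
      refine Finset.sum_congr rfl fun a _ => ?_
      have h2 : ∀ u ∈ univ.filter (fun u : (ZMod p)ˣ => u ^ k = a),
          ψ' ((u : ZMod p) ^ k) = ψ' (a : ZMod p) := by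
        intro u hu
        rw [← Units.val_pow_eq_pow_val, (Finset.mem_filter.mp hu).2]
      rw [Finset.sum_congr rfl h2, Finset.sum_const, nsmul_eq_mul]
    rw [h1]
    have h3 : ∀ a : (ZMod p)ˣ, ((univ.filter (fun u : (ZMod p)ˣ => u ^ k = a)).card : ℂ)
        = ∑ j ∈ range d, (χ₀ ^ j) (a : ZMod p) := by
      intro a
      rw [claimA hk hddef hχ₀ a]
      exact Finset.sum_congr rfl fun j _ => (MulChar.pow_apply_coe χ₀ j a).symm
    rw [Finset.sum_congr rfl (fun a _ => by rw [h3 a, Finset.sum_mul])]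
    rw [Finset.sum_comm]
  -- Step 4a : the trivial character term
  have hT0 : ∑ u : (ZMod p)ˣ, (χ₀ ^ 0) (u : ZMod p) * ψ' (u : ZMod p) = -1 := by
    have h1 : ∀ u : (ZMod p)ˣ, (χ₀ ^ 0) (u : ZMod p) * ψ' (u : ZMod p) = ψ' (u : ZMod p) := by
      intro u
      rw [pow_zero, MulChar.one_apply_coe, one_mul]
    rw [Finset.sum_congr rfl (fun u _ => h1 u)]
    have hsum := AddChar.sum_eq_zero_of_ne_one hψ'ne
    rw [sum_units_eq (fun a => ψ' a), AddChar.map_zero_eq_one] at hsum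
    linear_combination hsum
  -- Step 4b : the Gauss sum terms
  have hTj : ∀ j ∈ Finset.Ico 1 d,
      ‖∑ u : (ZMod p)ˣ, (χ₀ ^ j) (u : ZMod p) * ψ' (u : ZMod p)‖ = Real.sqrt p := by
    intro j hj
    obtain ⟨hj1, hj2⟩ := Finset.mem_Ico.mp hj
    have hχj : (χ₀ ^ j : MulChar (ZMod p) ℂ) ≠ 1 :=
      pow_ne_one_of_lt_orderOf (by omega) (by rw [hχ₀]; omega)
    have hgs : ∑ u : (ZMod p)ˣ, (χ₀ ^ j) (u : ZMod p) * ψ' (u : ZMod p)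
        = gaussSum (χ₀ ^ j) ψ' := by
      rw [gaussSum, sum_units_eq (fun a => (χ₀ ^ j) a * ψ' a), MulChar.map_zero, zero_mul,
        zero_add]
    rw [hgs]
    exact abs_gaussSum hχj hψ'prim
  -- assemble
  have htotal : expSum p k s
      = ∑ j ∈ Finset.Ico 1 d, ∑ u : (ZMod p)ˣ, (χ₀ ^ j) (u : ZMod p) * ψ' (u : ZMod p) := by
    rw [step1, step2, step3, Finset.range_eq_Ico,
      Finset.sum_eq_sum_Ico_succ_bot (Nat.pos_of_ne_zero hd0), hT0]
    ring
  rw [htotal]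
  calc ‖∑ j ∈ Finset.Ico 1 d,
          ∑ u : (ZMod p)ˣ, (χ₀ ^ j) (u : ZMod p) * ψ' (u : ZMod p)‖
      ≤ ∑ j ∈ Finset.Ico 1 d,
          ‖∑ u : (ZMod p)ˣ, (χ₀ ^ j) (u : ZMod p) * ψ' (u : ZMod p)‖ :=
        norm_sum_le _ _
    _ = ∑ j ∈ Finset.Ico 1 d, Real.sqrt p := Finset.sum_congr rfl hTj
    _ = ((d : ℝ) - 1) * Real.sqrt p := by
        rw [Finset.sum_const, Nat.card_Ico, nsmul_eq_mul, Nat.cast_sub (by omega), Nat.cast_one]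
    _ ≤ ((k : ℝ) - 1) * Real.sqrt p := by
        have hdk' : (d : ℝ) ≤ (k : ℝ) := Nat.cast_le.mpr hdk
        have := Real.sqrt_nonneg (p : ℝ)
        nlinarith
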